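/- With v_1, v_2, v_3 defined by the recursive Mex algorithm, for every n ≥ 1 one has v_3(n+1) - v_1(n+1) ≥ v_3(n) - v_1(n) + 2. -/

import Mathlib

/-- Minimum excluded value of a set of natural numbers. -/
noncomputable def mex (S : Set ℕ) : ℕ := sInf {m : ℕ | m ∉ S}

/-- Coordinates of a set of triples. -/
def coords (G : Set (ℕ × ℕ × ℕ)) : Set ℕ :=
  {k | ∃ x ∈ G, k = x.1 ∨ k = x.2.1 ∨ k = x.2.2}

/-- Pairwise coordinate differences of a set of triples. -/
def diffs (G : Set (ℕ × ℕ × ℕ)) : Set ℕ :=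
  {d | ∃ x ∈ G, d = x.2.1 - x.1 ∨ d = x.2.2 - x.2.1 ∨ d = x.2.2 - x.1}

/-- One step of the Mex algorithm: the next P-position. -/
noncomputable def step (G : Set (ℕ × ℕ × ℕ)) : ℕ × ℕ × ℕ :=
  let F := coords G
  let D := diffs G
  let a := mex F
  let b := mex ((fun d => a + d) '' D ∪ Set.Icc 1 a ∪ F)
  let c := mex ((fun d => b + d) '' D ∪ Set.Icc 1 b ∪ F)
  (a, b, c)

/-- The sets `G_n` of P-positions computed by the Mex algorithm. -/
noncomputable def Gset : ℕ → Set (ℕ × ℕ × ℕ)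
  | 0 => {(0, 0, 0)}
  | n + 1 => Gset n ∪ {step (Gset n)}

/-- The `n`-th P-position `(v_1(n), v_2(n), v_3(n))`. -/
noncomputable def v : ℕ → ℕ × ℕ × ℕ
  | 0 => (0, 0, 0)
  | n + 1 => step (Gset n)

noncomputable def v1 (n : ℕ) : ℕ := (v n).1
noncomputable def v2 (n : ℕ) : ℕ := (v n).2.1
noncomputable def v3 (n : ℕ) : ℕ := (v n).2.2

/-- `F_n`: the set of coordinates of elements of `G_n`. -/
noncomputable def Fset (n : ℕ) : Set ℕ := coords (Gset n)

/-- `D_n`: the set of pairwise coordinate differences over `G_n`. -/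
noncomputable def Dset (n : ℕ) : Set ℕ := diffs (Gset n)

-- helpers
lemma exists_not_mem_of_finite {S : Set ℕ} (h : S.Finite) : ∃ x, x ∉ S := by
  obtain ⟨x, hx⟩ := h.infinite_compl.nonempty
  exact ⟨x, hx⟩

lemma mex_le {S : Set ℕ} {k : ℕ} (h : k ∉ S) : mex S ≤ k := Nat.sInf_le h

lemma mem_of_lt_mex {S : Set ℕ} {m : ℕ} (h : m < mex S) : m ∈ S := by
  by_contra hm
  exact absurd (mex_le hm) (by omega)

lemma mex_not_mem {S : Set ℕ} (h : S.Finite) : mex S ∉ S := by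
  obtain ⟨x, hx⟩ := exists_not_mem_of_finite h
  exact Nat.sInf_mem (⟨x, hx⟩ : Set.Nonempty {m : ℕ | m ∉ S})

lemma le_mex {S : Set ℕ} {k : ℕ} (hfin : S.Finite) (h : ∀ m < k, m ∈ S) : k ≤ mex S := by
  by_contra hl
  exact mex_not_mem hfin (h _ (by omega))

lemma mex_mono {S T : Set ℕ} (hsub : S ⊆ T) (hT : T.Finite) : mex S ≤ mex T :=
  mex_le fun hm => mex_not_mem hT (hsub hm)

lemma finite_Gset (n : ℕ) : (Gset n).Finite := by
  induction n with
  | zero => simpa [Gset] using Set.finite_singleton ((0,0,0) : ℕ×ℕ×ℕ)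
  | succ n ih => simpa [Gset] using ih.union (Set.finite_singleton (step (Gset n)))

lemma finite_coords {G : Set (ℕ×ℕ×ℕ)} (h : G.Finite) : (coords G).Finite := by
  have hsub : coords G ⊆ ⋃ x ∈ G, ({x.1, x.2.1, x.2.2} : Set ℕ) := by
    rintro k ⟨x, hx, hk⟩
    refine Set.mem_biUnion hx ?_
    rcases hk with h1|h1|h1 <;> simp [h1]
  exact (Set.Finite.biUnion h (fun x _ => (Set.finite_singleton _).insert _ |>.insert _)).subset hsub

lemma finite_diffs {G : Set (ℕ×ℕ×ℕ)} (h : G.Finite) : (diffs G).Finite := by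
  have hsub : diffs G ⊆ ⋃ x ∈ G, ({x.2.1 - x.1, x.2.2 - x.2.1, x.2.2 - x.1} : Set ℕ) := by
    rintro k ⟨x, hx, hk⟩
    refine Set.mem_biUnion hx ?_
    rcases hk with h1|h1|h1 <;> simp [h1]
  exact (Set.Finite.biUnion h (fun x _ => (Set.finite_singleton _).insert _ |>.insert _)).subset hsub

lemma finite_Fset (n : ℕ) : (Fset n).Finite := finite_coords (finite_Gset n)
lemma finite_Dset (n : ℕ) : (Dset n).Finite := finite_diffs (finite_Gset n)

-- reduction lemmas
lemma v1_succ (n : ℕ) : v1 (n+1) = mex (Fset n) := rfl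
lemma v2_succ (n : ℕ) :
    v2 (n+1) = mex ((fun d => v1 (n+1) + d) '' Dset n ∪ Set.Icc 1 (v1 (n+1)) ∪ Fset n) := rfl
lemma v3_succ (n : ℕ) :
    v3 (n+1) = mex ((fun d => v2 (n+1) + d) '' Dset n ∪ Set.Icc 1 (v2 (n+1)) ∪ Fset n) := rfl

lemma v1_zero : v1 0 = 0 := rfl
lemma v2_zero : v2 0 = 0 := rfl
lemma v3_zero : v3 0 = 0 := rfl

lemma mem_Gset {p : ℕ×ℕ×ℕ} {n : ℕ} : p ∈ Gset n ↔ ∃ k ≤ n, p = v k := by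
  induction n with
  | zero =>
    simp only [Gset, Set.mem_singleton_iff]
    constructor
    · rintro rfl; exact ⟨0, le_refl 0, rfl⟩
    · rintro ⟨k, hk, rfl⟩; interval_cases k; rfl
  | succ n ih =>
    simp only [Gset, Set.mem_union, Set.mem_singleton_iff, ih]
    constructor
    · rintro (⟨k, hk, rfl⟩ | rfl)
      · exact ⟨k, by omega, rfl⟩
      · exact ⟨n+1, le_refl _, rfl⟩
    · rintro ⟨k, hk, rfl⟩
      rcases Nat.lt_or_ge k (n+1) with h | h
      · exact Or.inl ⟨k, by omega, rfl⟩
      · right; have : k = n+1 := by omega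
        subst this; rfl

lemma Gset_mono {m n : ℕ} (h : m ≤ n) : Gset m ⊆ Gset n := by
  induction n with
  | zero => have : m = 0 := by omega
            subst this; exact subset_rfl
  | succ n ih =>
    rcases Nat.lt_or_ge m (n+1) with h' | h'
    · exact (ih (by omega)).trans (by rw [Gset]; exact Set.subset_union_left)
    · have : m = n+1 := by omega
      subst this; exact subset_rfl

lemma Fset_mono {m n : ℕ} (h : m ≤ n) : Fset m ⊆ Fset n := by
  intro x hx
  obtain ⟨p, hp, hk⟩ := hx
  exact ⟨p, Gset_mono h hp, hk⟩

lemma Dset_mono {m n : ℕ} (h : m ≤ n) : Dset m ⊆ Dset n := by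
  intro x hx
  obtain ⟨p, hp, hk⟩ := hx
  exact ⟨p, Gset_mono h hp, hk⟩

lemma mem_Fset {n x : ℕ} : x ∈ Fset n ↔ ∃ k ≤ n, x = v1 k ∨ x = v2 k ∨ x = v3 k := by
  constructor
  · rintro ⟨p, hp, hk⟩
    obtain ⟨k, hkn, rfl⟩ := mem_Gset.1 hp
    exact ⟨k, hkn, hk⟩
  · rintro ⟨k, hkn, hk⟩
    exact ⟨v k, mem_Gset.2 ⟨k, hkn, rfl⟩, hk⟩

lemma mem_Dset {n d : ℕ} :
    d ∈ Dset n ↔ ∃ k ≤ n, d = v2 k - v1 k ∨ d = v3 k - v2 k ∨ d = v3 k - v1 k := by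
  constructor
  · rintro ⟨p, hp, hk⟩
    obtain ⟨k, hkn, rfl⟩ := mem_Gset.1 hp
    exact ⟨k, hkn, hk⟩
  · rintro ⟨k, hkn, hk⟩
    exact ⟨v k, mem_Gset.2 ⟨k, hkn, rfl⟩, hk⟩

lemma zero_mem_Fset (n : ℕ) : 0 ∈ Fset n :=
  mem_Fset.2 ⟨0, Nat.zero_le n, Or.inl rfl⟩

lemma zero_mem_Dset (n : ℕ) : 0 ∈ Dset n :=
  mem_Dset.2 ⟨0, Nat.zero_le n, Or.inl rfl⟩

-- chaining helpers
lemma chain_mono {f : ℕ → ℕ} {n : ℕ} (h : ∀ k < n, f k < f (k+1)) :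
    ∀ i j, i ≤ j → j ≤ n → f i ≤ f j := by
  intro i j hij hjn
  induction j with
  | zero => have : i = 0 := by omega
            subst this; exact le_refl _
  | succ j ih =>
    rcases Nat.lt_or_ge i (j+1) with h' | h'
    · exact (ih (by omega) (by omega)).trans (le_of_lt (h j (by omega)))
    · have : i = j+1 := by omega
      subst this; exact le_refl _

lemma chain_add {f : ℕ → ℕ} {t n : ℕ} (h : ∀ k < n, f k + t ≤ f (k+1)) :
    ∀ i j, i < j → j ≤ n → f i + t ≤ f j := by
  intro i j hij hjn
  induction j with
  | zero => omega
  | succ j ih =>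
    rcases Nat.lt_or_ge i j with h' | h'
    · have h1 := ih (by omega) (by omega)
      have h2 := h j (by omega)
      omega
    · have : i = j := by omega
      subst this; exact h i (by omega)

structure MexInv (n : ℕ) : Prop where
  ord : ∀ k, k ≤ n → v1 k ≤ v2 k ∧ v2 k ≤ v3 k ∧ v3 k - v2 k ≤ v2 k - v1 k
  gapA : ∀ k, k < n → v1 k < v1 (k+1)
  gapC : ∀ k, k < n → v3 k + 3 ≤ v3 (k+1)
  gapH : ∀ k, k < n → v2 k - v1 k < v2 (k+1) - v1 (k+1)
  gapS : ∀ k, k < n → v3 k - v1 k + 2 ≤ v3 (k+1) - v1 (k+1)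
  interval : ∀ k, k ≤ n → ∀ e, e ≤ v2 k - v1 k → e ∈ Dset k
  bound : ∀ k, k ≤ n → ∀ x ∈ Fset k, x ≤ v3 k

lemma MexInv_zero : MexInv 0 := by
  have h1 : v1 0 = 0 := rfl
  have h2 : v2 0 = 0 := rfl
  have h3 : v3 0 = 0 := rfl
  constructor
  · intro k hk
    have : k = 0 := by omega
    subst this
    exact ⟨by omega, by omega, by omega⟩
  · intro k hk; exact absurd hk (by omega)
  · intro k hk; exact absurd hk (by omega)
  · intro k hk; exact absurd hk (by omega)
  · intro k hk; exact absurd hk (by omega)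
  · intro k hk e he
    have : k = 0 := by omega
    subst this
    have : e = 0 := by omega
    subst this
    exact zero_mem_Dset 0
  · intro k hk x hx
    have : k = 0 := by omega
    subst this
    obtain ⟨j, hj, hj'⟩ := mem_Fset.1 hx
    have : j = 0 := by omega
    subst this
    rcases hj' with rfl | rfl | rfl <;> omega

lemma MexInv_succ {n : ℕ} (I : MexInv n) : MexInv (n+1) := by
  have hTb_fin : ((fun d => v1 (n+1) + d) '' Dset n ∪ Set.Icc 1 (v1 (n+1)) ∪ Fset n).Finite :=
    (((finite_Dset n).image _).union (Set.finite_Icc _ _)).union (finite_Fset n)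
  have hTc_fin : ((fun d => v2 (n+1) + d) '' Dset n ∪ Set.Icc 1 (v2 (n+1)) ∪ Fset n).Finite :=
    (((finite_Dset n).image _).union (Set.finite_Icc _ _)).union (finite_Fset n)
  have haF : v1 (n+1) ∉ Fset n := by
    rw [v1_succ]; exact mex_not_mem (finite_Fset n)
  have ha_pos : 0 < v1 (n+1) := by
    rcases Nat.eq_zero_or_pos (v1 (n+1)) with h | h
    · exact absurd (h ▸ zero_mem_Fset n) haF
    · exact h
  have hgD : mex (Dset n) ∉ Dset n := mex_not_mem (finite_Dset n)
  have hg_pos : 0 < mex (Dset n) := by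
    rcases Nat.eq_zero_or_pos (mex (Dset n)) with h | h
    · exact absurd (h ▸ zero_mem_Dset n) hgD
    · exact h
  have hL2 : ∀ k, k ≤ n → v1 k < v1 (n+1) := by
    intro k hk
    have hmem : v1 k ∈ Fset n := mem_Fset.2 ⟨k, hk, Or.inl rfl⟩
    have hne : v1 k ≠ v1 (n+1) := fun h => haF (h ▸ hmem)
    rcases k with _ | m
    · have : v1 0 = 0 := rfl
      omega
    · have : v1 (m+1) ≤ v1 (n+1) := by
        rw [v1_succ, v1_succ]
        exact mex_mono (Fset_mono (by omega)) (finite_Fset n)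
      omega
  obtain ⟨hAB, hBC, hgh⟩ := I.ord n (le_refl n)
  have hhn_lt_g : v2 n - v1 n < mex (Dset n) := by
    by_contra hle
    exact hgD (I.interval n (le_refl n) (mex (Dset n)) (by omega))
  have hb_ge : v1 (n+1) + mex (Dset n) ≤ v2 (n+1) := by
    rw [v2_succ]
    apply le_mex hTb_fin
    intro m hm
    rcases Nat.lt_or_ge m 1 with h0 | h1
    · have : m = 0 := by omega
      subst this
      exact Or.inr (zero_mem_Fset n)
    rcases le_or_gt m (v1 (n+1)) with hma | hma
    · exact Or.inl (Or.inr (Set.mem_Icc.2 ⟨h1, hma⟩))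
    · exact Or.inl (Or.inl ⟨m - v1 (n+1),
        mem_of_lt_mex (show m - v1 (n+1) < mex (Dset n) by omega),
        show v1 (n+1) + (m - v1 (n+1)) = m by omega⟩)
  have hc_ge : v2 (n+1) + mex (Dset n) ≤ v3 (n+1) := by
    rw [v3_succ]
    apply le_mex hTc_fin
    intro m hm
    rcases Nat.lt_or_ge m 1 with h0 | h1
    · have : m = 0 := by omega
      subst this
      exact Or.inr (zero_mem_Fset n)
    rcases le_or_gt m (v2 (n+1)) with hma | hma
    · exact Or.inl (Or.inr (Set.mem_Icc.2 ⟨h1, hma⟩))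
    · exact Or.inl (Or.inl ⟨m - v2 (n+1),
        mem_of_lt_mex (show m - v2 (n+1) < mex (Dset n) by omega),
        show v2 (n+1) + (m - v2 (n+1)) = m by omega⟩)
  have hAn_lt : v1 n < v1 (n+1) := hL2 n (le_refl n)
  have hCn : ∀ x ∈ Fset n, x ≤ v3 n := I.bound n (le_refl n)
  have hc_le : v3 (n+1) ≤ v2 (n+1) + mex (Dset n) := by
    rw [v3_succ]
    apply mex_le
    rintro ((himg | hicc) | hF)
    · obtain ⟨d, hd, hde⟩ := himg
      have hde' : v2 (n+1) + d = v2 (n+1) + mex (Dset n) := hde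
      have : d = mex (Dset n) := by omega
      exact hgD (this ▸ hd)
    · have := Set.mem_Icc.1 hicc
      omega
    · have := hCn _ hF
      omega
  have hc_eq : v3 (n+1) = v2 (n+1) + mex (Dset n) := le_antisymm hc_le hc_ge
  -- second hole
  have hG2fin : (Dset n ∪ {mex (Dset n)} : Set ℕ).Finite :=
    (finite_Dset n).union (Set.finite_singleton _)
  have hG2D : mex (Dset n ∪ {mex (Dset n)}) ∉ Dset n :=
    fun h => mex_not_mem hG2fin (Or.inl h)
  have hG2_gt : mex (Dset n) < mex (Dset n ∪ {mex (Dset n)}) := by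
    have : mex (Dset n) + 1 ≤ mex (Dset n ∪ {mex (Dset n)}) := by
      apply le_mex hG2fin
      intro m hm
      rcases Nat.lt_or_ge m (mex (Dset n)) with h' | h'
      · exact Or.inl (mem_of_lt_mex h')
      · have : m = mex (Dset n) := by omega
        subst this
        exact Or.inr rfl
    omega
  -- blocker analysis
  have hana : ∀ γ : ℕ, γ ∉ Dset n → 0 < γ → v1 (n+1) + γ ∈ Fset n →
      ∃ m, m + 1 ≤ n ∧ v3 (m+1) = v1 (n+1) + γ ∧ v1 (n+1) < v2 (m+1) := by
    intro γ hγD hγpos hmem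
    obtain ⟨k, hkn, hk⟩ := mem_Fset.1 hmem
    rcases hk with hk | hk | hk
    · have := hL2 k hkn
      omega
    · exfalso
      rcases k with _ | m
      · have : v2 0 = 0 := rfl
        omega
      · have hm1n : m + 1 ≤ n := hkn
        have halt : v1 (n+1) < v2 (m+1) := by omega
        have hmm : v1 (n+1) ∈ (fun d => v1 (m+1) + d) '' Dset m ∪ Set.Icc 1 (v1 (m+1)) ∪ Fset m := by
          apply mem_of_lt_mex
          rw [← v2_succ]
          exact halt
        rcases hmm with (himg | hicc) | hF
        · obtain ⟨d, hd, hde⟩ := himg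
          have hde' : v1 (m+1) + d = v1 (n+1) := hde
          have hgle : γ ≤ v2 (m+1) - v1 (m+1) := by omega
          exact hγD (Dset_mono hm1n (I.interval (m+1) hm1n γ hgle))
        · have h1 := Set.mem_Icc.1 hicc
          have h2 := hL2 (m+1) hm1n
          omega
        · exact haF (Fset_mono (by omega) hF)
    · rcases k with _ | m
      · exfalso
        have : v3 0 = 0 := rfl
        omega
      · have hm1n : m + 1 ≤ n := hkn
        have halt : v1 (n+1) < v3 (m+1) := by omega
        have hmm : v1 (n+1) ∈ (fun d => v2 (m+1) + d) '' Dset m ∪ Set.Icc 1 (v2 (m+1)) ∪ Fset m := by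
          apply mem_of_lt_mex
          rw [← v3_succ]
          exact halt
        rcases hmm with (himg | hicc) | hF
        · exfalso
          obtain ⟨d, hd, hde⟩ := himg
          have hde' : v2 (m+1) + d = v1 (n+1) := hde
          obtain ⟨o1, o2, o3⟩ := I.ord (m+1) hm1n
          have hgle : γ ≤ v2 (m+1) - v1 (m+1) := by omega
          exact hγD (Dset_mono hm1n (I.interval (m+1) hm1n γ hgle))
        · have hic := Set.mem_Icc.1 hicc
          have hne : v1 (n+1) ≠ v2 (m+1) := by
            intro h
            exact haF (h ▸ mem_Fset.2 ⟨m+1, hm1n, Or.inr (Or.inl rfl)⟩)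
          exact ⟨m, hm1n, by omega, by omega⟩
        · exact absurd (Fset_mono (by omega) hF) haF
  -- no double blocking
  have hnd : ¬ (v1 (n+1) + mex (Dset n) ∈ Fset n ∧
               v1 (n+1) + mex (Dset n ∪ {mex (Dset n)}) ∈ Fset n) := by
    rintro ⟨h1, h2⟩
    obtain ⟨j, hjn, hCj, hBj⟩ := hana (mex (Dset n)) hgD hg_pos h1
    obtain ⟨k, hkn, hCk, hBk⟩ := hana (mex (Dset n ∪ {mex (Dset n)})) hG2D (by omega) h2
    have hjk : j < k := by
      rcases Nat.lt_trichotomy j k with h | h | h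
      · exact h
      · exfalso; subst h; omega
      · exfalso
        have : v3 (k+1) + 3 ≤ v3 (j+1) := chain_add I.gapC (k+1) (j+1) (by omega) (by omega)
        omega
    have hC3 : v3 (j+1) + 3 ≤ v3 (k+1) := chain_add I.gapC (j+1) (k+1) (by omega) (by omega)
    have hG2_ge : mex (Dset n) + 3 ≤ mex (Dset n ∪ {mex (Dset n)}) := by omega
    have hmem12 : ∀ t, (t = 1 ∨ t = 2) → mex (Dset n) + t ∈ Dset n := by
      intro t ht
      have h' : mex (Dset n) + t < mex (Dset n ∪ {mex (Dset n)}) := by omega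
      rcases mem_of_lt_mex h' with h | h
      · exact h
      · simp only [Set.mem_singleton_iff] at h
        omega
    have hdec : ∀ t, (t = 1 ∨ t = 2) → ∃ m ≤ n, v3 m - v1 m = mex (Dset n) + t := by
      intro t ht
      obtain ⟨m, hmn, hm⟩ := mem_Dset.1 (hmem12 t ht)
      have hmono : v2 m - v1 m ≤ v2 n - v1 n :=
        chain_mono (f := fun k => v2 k - v1 k) I.gapH m n hmn (le_refl n)
      rcases hm with hm | hm | hm
      · exfalso; omega
      · exfalso
        obtain ⟨o1, o2, o3⟩ := I.ord m hmn
        omega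
      · exact ⟨m, hmn, by omega⟩
    obtain ⟨m1, hm1, he1⟩ := hdec 1 (Or.inl rfl)
    obtain ⟨m2, hm2, he2⟩ := hdec 2 (Or.inr rfl)
    rcases Nat.lt_trichotomy m1 m2 with h | h | h
    · have : v3 m1 - v1 m1 + 2 ≤ v3 m2 - v1 m2 :=
        chain_add (f := fun k => v3 k - v1 k) I.gapS m1 m2 h hm2
      omega
    · subst h; omega
    · have : v3 m2 - v1 m2 + 2 ≤ v3 m1 - v1 m1 :=
        chain_add (f := fun k => v3 k - v1 k) I.gapS m2 m1 h hm1
      omega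
  -- the value of b
  have hb_le : v2 (n+1) ≤ v1 (n+1) + mex (Dset n ∪ {mex (Dset n)}) ∨
               v2 (n+1) = v1 (n+1) + mex (Dset n) := by
    by_cases hbl : v1 (n+1) + mex (Dset n) ∈ Fset n
    · left
      have h2 : v1 (n+1) + mex (Dset n ∪ {mex (Dset n)}) ∉ Fset n := fun h => hnd ⟨hbl, h⟩
      rw [v2_succ]
      apply mex_le
      rintro ((himg | hicc) | hF)
      · obtain ⟨d, hd, hde⟩ := himg
        have hde' : v1 (n+1) + d = v1 (n+1) + mex (Dset n ∪ {mex (Dset n)}) := hde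
        have : d = mex (Dset n ∪ {mex (Dset n)}) := by omega
        exact hG2D (this ▸ hd)
      · have := Set.mem_Icc.1 hicc
        omega
      · exact h2 hF
    · right
      have hle : v2 (n+1) ≤ v1 (n+1) + mex (Dset n) := by
        rw [v2_succ]
        apply mex_le
        rintro ((himg | hicc) | hF)
        · obtain ⟨d, hd, hde⟩ := himg
          have hde' : v1 (n+1) + d = v1 (n+1) + mex (Dset n) := hde
          have : d = mex (Dset n) := by omega
          exact hgD (this ▸ hd)
        · have := Set.mem_Icc.1 hicc
          omega
        · exact hbl hF
      omega
  -- interval property at n+1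
  have hrow_h : v2 (n+1) - v1 (n+1) ∈ Dset (n+1) :=
    mem_Dset.2 ⟨n+1, le_refl _, Or.inl rfl⟩
  have hrow_g : mex (Dset n) ∈ Dset (n+1) :=
    mem_Dset.2 ⟨n+1, le_refl _, Or.inr (Or.inl (by omega))⟩
  have hint : ∀ e, e ≤ v2 (n+1) - v1 (n+1) → e ∈ Dset (n+1) := by
    intro e he
    rcases Nat.lt_or_ge e (mex (Dset n)) with h' | h'
    · exact Dset_mono (by omega) (mem_of_lt_mex h')
    rcases Nat.eq_or_lt_of_le h' with h'' | h''
    · exact h'' ▸ hrow_g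
    · rcases hb_le with hle | heq
      · rcases Nat.lt_or_ge e (mex (Dset n ∪ {mex (Dset n)})) with h3 | h3
        · rcases mem_of_lt_mex h3 with h4 | h4
          · exact Dset_mono (by omega) h4
          · simp only [Set.mem_singleton_iff] at h4
            omega
        · have : e = v2 (n+1) - v1 (n+1) := by omega
          exact this ▸ hrow_h
      · omega
  -- assemble
  constructor
  · intro k hk
    rcases Nat.lt_or_ge k (n+1) with h | h
    · exact I.ord k (by omega)
    · have : k = n+1 := by omega
      subst this
      exact ⟨by omega, by omega, by omega⟩
  · intro k hk
    rcases Nat.lt_or_ge k n with h | h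
    · exact I.gapA k h
    · have : k = n := by omega
      subst this
      exact hAn_lt
  · intro k hk
    rcases Nat.lt_or_ge k n with h | h
    · exact I.gapC k h
    · have : k = n := by omega
      subst this
      omega
  · intro k hk
    rcases Nat.lt_or_ge k n with h | h
    · exact I.gapH k h
    · have : k = n := by omega
      subst this
      omega
  · intro k hk
    rcases Nat.lt_or_ge k n with h | h
    · exact I.gapS k h
    · have : k = n := by omega
      subst this
      omega
  · intro k hk e he
    rcases Nat.lt_or_ge k (n+1) with h | h
    · exact I.interval k (by omega) e he
    · have : k = n+1 := by omega
      subst this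
      exact hint e he
  · intro k hk x hx
    rcases Nat.lt_or_ge k (n+1) with h | h
    · exact I.bound k (by omega) x hx
    · have : k = n+1 := by omega
      subst this
      obtain ⟨j, hj, hj'⟩ := mem_Fset.1 hx
      rcases Nat.lt_or_ge j (n+1) with h2 | h2
      · have hxF : x ∈ Fset n := mem_Fset.2 ⟨j, by omega, hj'⟩
        have := hCn x hxF
        omega
      · have : j = n+1 := by omega
        subst this
        rcases hj' with rfl | rfl | rfl <;> omega

lemma MexInv_all (n : ℕ) : MexInv n := by
  induction n with
  | zero => exact MexInv_zero
  | succ n ih => exact MexInv_succ ih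

theorem stmt4 : ∀ n : ℕ, 1 ≤ n →
    (v3 n : ℤ) - v1 n + 2 ≤ (v3 (n + 1) : ℤ) - v1 (n + 1) := by
  intro n hn
  have I := MexInv_all (n+1)
  have h := I.gapS n (by omega)
  obtain ⟨o1, o2, _⟩ := I.ord n (by omega)
  obtain ⟨p1, p2, _⟩ := I.ord (n+1) (le_refl _)
  omega
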